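/- Let v₁,…,v₆ be trace-zero 2×2 complex matrices and r_{i₁⋯i_h} = -tr(v_{i₁}⋯v_{i_h}). Then 2·(r_{156}·r_{234} - r_{123}·r_{456}) = r_{16}·(r_{25}·r_{34} - r_{24}·r_{35}) + r_{26}·(r_{13}·r_{45} - r_{15}·r_{34}) + r_{36}·(r_{15}·r_{24} - r_{12}·r_{45}) + r_{46}·(r_{12}·r_{35} - r_{13}·r_{25}). -/
import Mathlib


open Matrix

theorem stmt_7 (v₁ v₂ v₃ v₄ v₅ v₆ : Matrix (Fin 2) (Fin 2) ℂ)
    (h₁ : trace v₁ = 0) (h₂ : trace v₂ = 0) (h₃ : trace v₃ = 0) (h₄ : trace v₄ = 0)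
    (h₅ : trace v₅ = 0) (h₆ : trace v₆ = 0) :
    2 * ((-(trace (v₁ * v₅ * v₆))) * (-(trace (v₂ * v₃ * v₄)))
          - (-(trace (v₁ * v₂ * v₃))) * (-(trace (v₄ * v₅ * v₆)))) =
      (-(trace (v₁ * v₆))) * ((-(trace (v₂ * v₅))) * (-(trace (v₃ * v₄)))
            - (-(trace (v₂ * v₄))) * (-(trace (v₃ * v₅))))
        + (-(trace (v₂ * v₆))) * ((-(trace (v₁ * v₃))) * (-(trace (v₄ * v₅)))
            - (-(trace (v₁ * v₅))) * (-(trace (v₃ * v₄))))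
        + (-(trace (v₃ * v₆))) * ((-(trace (v₁ * v₅))) * (-(trace (v₂ * v₄)))
            - (-(trace (v₁ * v₂))) * (-(trace (v₄ * v₅))))
        + (-(trace (v₄ * v₆))) * ((-(trace (v₁ * v₂))) * (-(trace (v₃ * v₅)))
            - (-(trace (v₁ * v₃))) * (-(trace (v₂ * v₅)))) := by

  rw [Matrix.trace_fin_two] at h₁ h₂ h₃ h₄ h₅ h₆
  have e₁ : v₁ 1 1 = -v₁ 0 0 := by linear_combination h₁
  have e₂ : v₂ 1 1 = -v₂ 0 0 := by linear_combination h₂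
  have e₃ : v₃ 1 1 = -v₃ 0 0 := by linear_combination h₃
  have e₄ : v₄ 1 1 = -v₄ 0 0 := by linear_combination h₄
  have e₅ : v₅ 1 1 = -v₅ 0 0 := by linear_combination h₅
  have e₆ : v₆ 1 1 = -v₆ 0 0 := by linear_combination h₆
  simp only [Matrix.trace_fin_two, Matrix.mul_apply, Fin.sum_univ_two, e₁, e₂, e₃, e₄, e₅, e₆]
  ring
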